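/- For the MEMS subclass I state ρ_MI with parameter r ∈ [2/3, 1], the two-qubit state {(0,0,(1−r)μp), (0,0,(1−r)μq), pqμ I₃} (local output of the asymmetric cloner, μ = 1/(1−pq), p+q=1, p,q ∈ [0,1]) has positive partial transpose; i.e., the local outputs are always separable. -/

import Mathlib

open Matrix
open scoped Matrix Kronecker BigOperators ComplexOrder

/-- The Pauli matrices σ₁, σ₂, σ₃. -/
noncomputable def pauli : Fin 3 → Matrix (Fin 2) (Fin 2) ℂ
  | 0 => !![0, 1; 1, 0]
  | 1 => !![0, -Complex.I; Complex.I, 0]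
  | 2 => !![1, 0; 0, -1]

/-- Canonical (Bloch/Fano) form {a⃗, b⃗, M} of a two-qubit operator:
(1/4)[I₄ + Σᵢ aᵢσᵢ⊗I₂ + Σᵢ bᵢ I₂⊗σᵢ + Σᵢⱼ Mᵢⱼ σᵢ⊗σⱼ]. -/
noncomputable def canon (a b : Fin 3 → ℝ) (M : Matrix (Fin 3) (Fin 3) ℝ) :
    Matrix (Fin 2 × Fin 2) (Fin 2 × Fin 2) ℂ :=
  (1 / 4 : ℂ) • ((1 : Matrix (Fin 2 × Fin 2) (Fin 2 × Fin 2) ℂ)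
    + ∑ i : Fin 3, (a i : ℂ) • (pauli i ⊗ₖ (1 : Matrix (Fin 2) (Fin 2) ℂ))
    + ∑ i : Fin 3, (b i : ℂ) • ((1 : Matrix (Fin 2) (Fin 2) ℂ) ⊗ₖ pauli i)
    + ∑ i : Fin 3, ∑ j : Fin 3, (M i j : ℂ) • (pauli i ⊗ₖ pauli j))

/-- Partial transpose on the second qubit. -/
noncomputable def ptB (ρ : Matrix (Fin 2 × Fin 2) (Fin 2 × Fin 2) ℂ) :
    Matrix (Fin 2 × Fin 2) (Fin 2 × Fin 2) ℂ :=
  fun r s => ρ (r.1, s.2) (s.1, r.2)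

set_option maxHeartbeats 1000000 in
/-- For the MEMS subclass I resource (2/3 ≤ r ≤ 1), the local outputs
{(0,0,(1−r)μp), (0,0,(1−r)μq), pqμ I₃} of the local asymmetric cloner are PPT,
i.e. always separable. -/
theorem memsI_local_output_ppt (r p q : ℝ) (hr0 : 2 / 3 ≤ r) (hr : r ≤ 1)
    (hp : 0 ≤ p) (hp1 : p ≤ 1) (hq : 0 ≤ q) (hq1 : q ≤ 1) (hpq : p + q = 1) :
    (ptB (canon ![0, 0, (1 - r) * (1 / (1 - p * q)) * p]
        ![0, 0, (1 - r) * (1 / (1 - p * q)) * q]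
        ((p * q * (1 / (1 - p * q))) • (1 : Matrix (Fin 3) (Fin 3) ℝ)))).PosSemidef := by
  have hpq4 : p * q ≤ 1 / 4 := by nlinarith [sq_nonneg (p - q)]
  have hs : (0 : ℝ) < 1 - p * q := by nlinarith
  set u : ℝ := 1 / (1 - p * q) with hu
  have hu0 : 0 < u := by positivity
  have huu : u * (1 - p * q) = 1 := by rw [hu]; field_simp
  have hu43 : u ≤ 4 / 3 := by rw [hu, div_le_iff₀ hs]; nlinarith
  set a : ℝ := (1 - r) * u * p with ha
  set b : ℝ := (1 - r) * u * q with hb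
  set m : ℝ := p * q * u with hm
  have hm0 : 0 ≤ m := by positivity
  have hr1 : (0:ℝ) ≤ 1 - r := by linarith
  have hab0 : 0 ≤ a := by rw [ha]; exact mul_nonneg (mul_nonneg hr1 hu0.le) hp
  have hbb0 : 0 ≤ b := by rw [hb]; exact mul_nonneg (mul_nonneg hr1 hu0.le) hq
  have hm13 : m ≤ 1 / 3 := by
    rw [hm]; nlinarith [mul_nonneg hp hq]
  have habu : a + b = (1 - r) * u := by rw [ha, hb]; nlinarith
  have hab13 : a + b ≤ 1 / 3 * (4 / 3) := by
    rw [habu]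
    have h1 : 1 - r ≤ 1 / 3 := by linarith
    nlinarith
  -- key inequalities for the diagonal entries
  have e00 : 0 ≤ (1 + a + b - m) / 4 := by nlinarith
  have e11 : 0 ≤ (1 - a - b - m) / 4 := by
    have : a + b + m ≤ 1 := by
      rw [habu, hm]
      have key : (1 - r) + p * q ≤ 1 - p * q := by nlinarith
      nlinarith [mul_le_mul_of_nonneg_left key hu0.le]
    linarith
  have e01 : 0 ≤ (1 + a - b - m) / 4 := by
    have key : a - b - m ≥ -1 := by
      rw [ha, hb, hm]
      have h2 : (1 - r) * (p - q) + (1 - p * q) ≥ p * q := by nlinarith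
      nlinarith [mul_le_mul_of_nonneg_left h2 hu0.le]
    linarith
  have e10 : 0 ≤ (1 - a + b - m) / 4 := by
    have key : b - a - m ≥ -1 := by
      rw [ha, hb, hm]
      have h2 : (1 - r) * (q - p) + (1 - p * q) ≥ p * q := by nlinarith
      nlinarith [mul_le_mul_of_nonneg_left h2 hu0.le]
    linarith
  -- decomposition: rank-one part plus nonnegative diagonal
  have hc0 : (0:ℝ) ≤ m / 2 := by linarith
  set sc : ℂ := (Real.sqrt (m / 2) : ℂ) with hsc
  have hsc2 : sc * (starRingEnd ℂ) sc = ((m / 2 : ℝ) : ℂ) := by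
    rw [hsc, Complex.conj_ofReal, ← Complex.ofReal_mul, Real.mul_self_sqrt hc0]
  set W : Matrix (Fin 2 × Fin 2) (Fin 1) ℂ :=
    fun x _ => if x = (0, 0) ∨ x = (1, 1) then sc else 0 with hW
  set d : Fin 2 × Fin 2 → ℂ :=
    fun x => ((!![(1 + a + b - m) / 4, (1 + a - b - m) / 4;
        (1 - a + b - m) / 4, (1 - a - b - m) / 4] x.1 x.2 : ℝ) : ℂ) with hd
  have key : ptB (canon ![0, 0, a] ![0, 0, b] (m • (1 : Matrix (Fin 3) (Fin 3) ℝ)))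
      = W * Wᴴ + Matrix.diagonal d := by
    ext ⟨i, j⟩ ⟨k, l⟩
    simp only [Matrix.add_apply, Matrix.mul_apply, Matrix.conjTranspose_apply]
    fin_cases i <;> fin_cases j <;> fin_cases k <;> fin_cases l <;>
      simp [ptB, canon, pauli, Fin.sum_univ_three, hW, hd,
        Matrix.mul_apply, Fin.sum_univ_one, Matrix.one_apply, Matrix.diagonal_apply,
        Prod.ext_iff, mul_comm, hsc2] <;>
      push_cast <;> ring
  rw [key]
  refine (Matrix.posSemidef_self_mul_conjTranspose W).add
    (Matrix.posSemidef_diagonal_iff.mpr fun i => ?_)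
  rw [hd]
  refine Complex.zero_le_real.mpr ?_
  fin_cases i <;> simpa using by assumption
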